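/- Fix κ₀, B₀, B₀¹ ∈ ℂ and let P be the polynomial ring over ℂ in the variables y_{-n} and y¹_{-n} for n ≥ 1. Define ℂ-linear endomorphisms of P by: ρ(b_n) = multiplication by y_n and ρ(b¹_n) = multiplication by y¹_n for n < 0; ρ(b_n) = -2n κ₀ ∂/∂y_{-n} for n > 0; ρ(b¹_n) = -(2+2n) κ₀ ∂/∂y¹_{-2-n} - 4(1+2n) κ₀ ∂/∂y¹_{-1-n} for n > 0; ρ(b_0) = B₀ · id; and ρ(b¹_0) = -2κ₀ ∂/∂y¹_{-2} - 4κ₀ ∂/∂y¹_{-1} + B₀¹ · id. Then for all integers m, n the commutators satisfy: [ρ(b_m), ρ(b_n)] = -2m δ_{m+n,0} κ₀ · id, [ρ(b¹_m), ρ(b¹_n)] = 2((n+1) δ_{m+n,-2} + (4n+2) δ_{m+n,-1}) κ₀ · id, and [ρ(b¹_m), ρ(b_n)] = 0; that is, ρ defines a representation of the 3-point Heisenberg relations on P in which the central element 1₀ acts by κ₀ and the central element 1₁ acts by 0. -/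

import Mathlib

noncomputable section

/-- The polynomial ring `P = ℂ[y_{-n}, y¹_{-n} | n ≥ 1]`: the variable `Sum.inl j` stands for
`y_{-(j+1)}` and the variable `Sum.inr j` stands for `y¹_{-(j+1)}` (for `j : ℕ`). -/
abbrev HP : Type := MvPolynomial (ℕ ⊕ ℕ) ℂ

/-- The variable `y_n` (for `n < 0`). -/
def yv (n : ℤ) : HP := MvPolynomial.X (Sum.inl (-n - 1).toNat)

/-- The variable `y¹_n` (for `n < 0`). -/
def yv1 (n : ℤ) : HP := MvPolynomial.X (Sum.inr (-n - 1).toNat)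

/-- The formal partial derivative operator `∂/∂y_{-n}` (for `n ≥ 1`), as a `ℂ`-linear
endomorphism of `P`. -/
def pd (n : ℤ) : HP →ₗ[ℂ] HP := (MvPolynomial.pderiv (Sum.inl (n - 1).toNat)).toLinearMap

/-- The formal partial derivative operator `∂/∂y¹_{-n}` (for `n ≥ 1`), as a `ℂ`-linear
endomorphism of `P`. -/
def pd1 (n : ℤ) : HP →ₗ[ℂ] HP := (MvPolynomial.pderiv (Sum.inr (n - 1).toNat)).toLinearMap

/-- The operator `ρ(b_n)`:  multiplication by `y_n` for `n < 0`, the scalar `B₀` for `n = 0`,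
and `-2n κ₀ ∂/∂y_{-n}` for `n > 0`. -/
def ρb (κ₀ B₀ : ℂ) (n : ℤ) : HP →ₗ[ℂ] HP :=
  if n < 0 then LinearMap.mulLeft ℂ (yv n)
  else if n = 0 then B₀ • LinearMap.id
  else (-2 * (n : ℂ) * κ₀) • pd n

/-- The operator `ρ(b¹_n)`:  multiplication by `y¹_n` for `n < 0`,
`-2κ₀ ∂/∂y¹_{-2} - 4κ₀ ∂/∂y¹_{-1} + B01·id` for `n = 0`, and
`-(2+2n)κ₀ ∂/∂y¹_{-2-n} - 4(1+2n)κ₀ ∂/∂y¹_{-1-n}` for `n > 0`. -/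
def ρb1 (κ₀ B01 : ℂ) (n : ℤ) : HP →ₗ[ℂ] HP :=
  if n < 0 then LinearMap.mulLeft ℂ (yv1 n)
  else if n = 0 then (-2 * κ₀) • pd1 2 + (-4 * κ₀) • pd1 1 + B01 • LinearMap.id
  else (-(2 + 2 * (n : ℂ)) * κ₀) • pd1 (2 + n) + (-4 * (1 + 2 * (n : ℂ)) * κ₀) • pd1 (1 + n)

open MvPolynomial in
private lemma pderiv_comm' {σ R : Type*} [CommSemiring R] [DecidableEq σ] (i j : σ)
    (p : MvPolynomial σ R) : pderiv i (pderiv j p) = pderiv j (pderiv i p) := by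
  induction p using MvPolynomial.induction_on with
  | C a => simp
  | add p q hp hq => simp [hp, hq]
  | mul_X p k h =>
    simp [pderiv_mul, h, Pi.single_apply]
    split_ifs <;> (try simp only [map_zero, add_zero, zero_add]) <;> (try ring)

/-- The commutator of two endomorphisms of `P`. -/
def br (A B : HP →ₗ[ℂ] HP) : HP →ₗ[ℂ] HP := A ∘ₗ B - B ∘ₗ A

lemma br_add_left (A A' B : HP →ₗ[ℂ] HP) : br (A + A') B = br A B + br A' B := by
  simp only [br, LinearMap.add_comp, LinearMap.comp_add]; abel

lemma br_add_right (A B B' : HP →ₗ[ℂ] HP) : br A (B + B') = br A B + br A B' := by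
  simp only [br, LinearMap.add_comp, LinearMap.comp_add]; abel

lemma br_smul_left (c : ℂ) (A B : HP →ₗ[ℂ] HP) : br (c • A) B = c • br A B := by
  simp only [br, LinearMap.smul_comp, LinearMap.comp_smul, smul_sub]

lemma br_smul_right (c : ℂ) (A B : HP →ₗ[ℂ] HP) : br A (c • B) = c • br A B := by
  simp only [br, LinearMap.smul_comp, LinearMap.comp_smul, smul_sub]

@[simp] lemma br_id_left (B : HP →ₗ[ℂ] HP) : br LinearMap.id B = 0 := by
  simp [br]

@[simp] lemma br_id_right (A : HP →ₗ[ℂ] HP) : br A LinearMap.id = 0 := by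
  simp [br]

lemma br_skew (A B : HP →ₗ[ℂ] HP) : br A B = - br B A := by
  simp [br]

open MvPolynomial in
lemma br_pderiv_mul (i : ℕ ⊕ ℕ) (a : HP) :
    br (pderiv i).toLinearMap (LinearMap.mulLeft ℂ a) = LinearMap.mulLeft ℂ (pderiv i a) :=
  LinearMap.ext fun p => by simp [br, pderiv_mul]; ring

open MvPolynomial in
lemma br_pderiv_pderiv (i j : ℕ ⊕ ℕ) :
    br (pderiv i).toLinearMap (pderiv (σ := ℕ ⊕ ℕ) (R := ℂ) j).toLinearMap = 0 :=
  LinearMap.ext fun p => by simp [br, pderiv_comm' i j p]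

@[simp] lemma br_mul_mul (a b : HP) :
    br (LinearMap.mulLeft ℂ a) (LinearMap.mulLeft ℂ b) = 0 :=
  LinearMap.ext fun p => by simp [br]; ring

@[simp] lemma br_pd_pd (k l : ℤ) : br (pd k) (pd l) = 0 := br_pderiv_pderiv _ _
@[simp] lemma br_pd_pd1 (k l : ℤ) : br (pd k) (pd1 l) = 0 := br_pderiv_pderiv _ _
@[simp] lemma br_pd1_pd (k l : ℤ) : br (pd1 k) (pd l) = 0 := br_pderiv_pderiv _ _
@[simp] lemma br_pd1_pd1 (k l : ℤ) : br (pd1 k) (pd1 l) = 0 := br_pderiv_pderiv _ _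

open MvPolynomial in
lemma br_pd_yv {k m : ℤ} (hk : 0 < k) (hm : m < 0) :
    br (pd k) (LinearMap.mulLeft ℂ (yv m)) = if k + m = 0 then LinearMap.id else 0 := by
  rw [pd, yv, br_pderiv_mul]
  split_ifs with h
  · rw [show (-m - 1).toNat = (k - 1).toNat from by omega, pderiv_X_self,
      LinearMap.mulLeft_one ℂ HP]
  · rw [pderiv_X_of_ne (by simp only [ne_eq, Sum.inl.injEq]; omega),
      LinearMap.mulLeft_zero_eq_zero ℂ HP]

open MvPolynomial in
lemma br_pd1_yv1 {k m : ℤ} (hk : 0 < k) (hm : m < 0) :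
    br (pd1 k) (LinearMap.mulLeft ℂ (yv1 m)) = if k + m = 0 then LinearMap.id else 0 := by
  rw [pd1, yv1, br_pderiv_mul]
  split_ifs with h
  · rw [show (-m - 1).toNat = (k - 1).toNat from by omega, pderiv_X_self,
      LinearMap.mulLeft_one ℂ HP]
  · rw [pderiv_X_of_ne (by simp only [ne_eq, Sum.inr.injEq]; omega),
      LinearMap.mulLeft_zero_eq_zero ℂ HP]

open MvPolynomial in
@[simp] lemma br_pd_yv1 (k m : ℤ) : br (pd k) (LinearMap.mulLeft ℂ (yv1 m)) = 0 := by
  rw [pd, yv1, br_pderiv_mul, pderiv_X_of_ne (by simp), LinearMap.mulLeft_zero_eq_zero ℂ HP]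

open MvPolynomial in
@[simp] lemma br_pd1_yv (k m : ℤ) : br (pd1 k) (LinearMap.mulLeft ℂ (yv m)) = 0 := by
  rw [pd1, yv, br_pderiv_mul, pderiv_X_of_ne (by simp), LinearMap.mulLeft_zero_eq_zero ℂ HP]

lemma br_yv_pd {k m : ℤ} (hk : 0 < k) (hm : m < 0) :
    br (LinearMap.mulLeft ℂ (yv m)) (pd k) = if k + m = 0 then -LinearMap.id else 0 := by
  rw [br_skew, br_pd_yv hk hm]; split_ifs <;> simp

lemma br_yv1_pd1 {k m : ℤ} (hk : 0 < k) (hm : m < 0) :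
    br (LinearMap.mulLeft ℂ (yv1 m)) (pd1 k) = if k + m = 0 then -LinearMap.id else 0 := by
  rw [br_skew, br_pd1_yv1 hk hm]; split_ifs <;> simp

@[simp] lemma br_yv1_pd (m k : ℤ) : br (LinearMap.mulLeft ℂ (yv1 m)) (pd k) = 0 := by
  rw [br_skew, br_pd_yv1, neg_zero]

@[simp] lemma br_yv_pd1 (m k : ℤ) : br (LinearMap.mulLeft ℂ (yv m)) (pd1 k) = 0 := by
  rw [br_skew, br_pd1_yv, neg_zero]

/-- The operators `ρ(b_n)` and `ρ(b¹_n)` define a representation of the 3-point Heisenberg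
relations on `P` in which the central element `1₀` acts by `κ₀` and `1₁` acts by `0`:
`[ρ(b_m), ρ(b_n)] = -2m δ_{m+n,0} κ₀ · id`,
`[ρ(b¹_m), ρ(b¹_n)] = 2((n+1) δ_{m+n,-2} + (4n+2) δ_{m+n,-1}) κ₀ · id`, and
`[ρ(b¹_m), ρ(b_n)] = 0`. -/
theorem stmt_19 (κ₀ B₀ B01 : ℂ) (m n : ℤ) :
    ρb κ₀ B₀ m ∘ₗ ρb κ₀ B₀ n - ρb κ₀ B₀ n ∘ₗ ρb κ₀ B₀ m =
      (if m + n = 0 then -2 * (m : ℂ) * κ₀ else 0) • LinearMap.id ∧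
    ρb1 κ₀ B01 m ∘ₗ ρb1 κ₀ B01 n - ρb1 κ₀ B01 n ∘ₗ ρb1 κ₀ B01 m =
      (2 * ((if m + n = -2 then (n : ℂ) + 1 else 0) +
        (if m + n = -1 then 4 * (n : ℂ) + 2 else 0)) * κ₀) • LinearMap.id ∧
    ρb1 κ₀ B01 m ∘ₗ ρb κ₀ B₀ n - ρb κ₀ B₀ n ∘ₗ ρb1 κ₀ B01 m = 0 := by
  have hb_neg : ∀ k : ℤ, k < 0 → ρb κ₀ B₀ k = LinearMap.mulLeft ℂ (yv k) := by
    intro k hk; unfold ρb; rw [if_pos hk]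
  have hb_zero : ρb κ₀ B₀ 0 = B₀ • LinearMap.id := by
    unfold ρb; norm_num
  have hb_pos : ∀ k : ℤ, 0 < k → ρb κ₀ B₀ k = (-2 * (k : ℂ) * κ₀) • pd k := by
    intro k hk; unfold ρb; rw [if_neg (by omega), if_neg (by omega)]
  have hb1_neg : ∀ k : ℤ, k < 0 → ρb1 κ₀ B01 k = LinearMap.mulLeft ℂ (yv1 k) := by
    intro k hk; unfold ρb1; rw [if_pos hk]
  have hb1_zero : ρb1 κ₀ B01 0 = (-2 * κ₀) • pd1 2 + (-4 * κ₀) • pd1 1 + B01 • LinearMap.id := by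
    unfold ρb1; norm_num
  have hb1_pos : ∀ k : ℤ, 0 < k → ρb1 κ₀ B01 k =
      (-(2 + 2 * (k : ℂ)) * κ₀) • pd1 (2 + k) + (-4 * (1 + 2 * (k : ℂ)) * κ₀) • pd1 (1 + k) := by
    intro k hk; unfold ρb1; rw [if_neg (by omega), if_neg (by omega)]
  refine ⟨?_, ?_, ?_⟩
  · show br (ρb κ₀ B₀ m) (ρb κ₀ B₀ n) = _
    rcases lt_trichotomy m 0 with hm | hm | hm <;> rcases lt_trichotomy n 0 with hn | hn | hn
    · rw [hb_neg m hm, hb_neg n hn, br_mul_mul, if_neg (by omega), zero_smul]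
    · subst hn
      rw [hb_neg m hm, hb_zero, br_smul_right, br_id_right, smul_zero, if_neg (by omega),
        zero_smul]
    · rw [hb_neg m hm, hb_pos n hn, br_smul_right, br_yv_pd hn hm]
      simp only [show (n + m = 0) ↔ (m + n = 0) from by omega]
      split_ifs with h
      · have hc : (n : ℂ) = -(m : ℂ) := by
          have hnm : n = -m := by omega
          rw [hnm]; push_cast; ring
        rw [hc]; module
      · simp
    · subst hm
      rw [hb_zero, hb_neg n hn, br_smul_left, br_id_left, smul_zero, if_neg (by omega), zero_smul]
    · subst hm; subst hn
      rw [hb_zero, br_smul_left, br_id_left, smul_zero, if_pos (by norm_num)]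
      norm_num
    · subst hm
      rw [hb_zero, hb_pos n hn, br_smul_left, br_id_left, smul_zero, if_neg (by omega), zero_smul]
    · rw [hb_pos m hm, hb_neg n hn, br_smul_left, br_pd_yv hm hn]
      split_ifs with h
      · module
      · simp
    · subst hn
      rw [hb_pos m hm, hb_zero, br_smul_left, br_smul_right, br_id_right, smul_zero, smul_zero,
        if_neg (by omega), zero_smul]
    · rw [hb_pos m hm, hb_pos n hn, br_smul_left, br_smul_right, br_pd_pd, smul_zero, smul_zero,
        if_neg (by omega), zero_smul]
  · show br (ρb1 κ₀ B01 m) (ρb1 κ₀ B01 n) = _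
    rcases lt_trichotomy m 0 with hm | hm | hm <;> rcases lt_trichotomy n 0 with hn | hn | hn
    · rw [hb1_neg m hm, hb1_neg n hn, br_mul_mul, if_neg (by omega : ¬ m + n = -1), add_zero]
      by_cases h1 : m + n = -2
      · have hn1 : n = -1 := by omega
        subst hn1
        rw [if_pos h1]; norm_num
      · rw [if_neg h1]; norm_num
    · subst hn
      rw [hb1_neg m hm, hb1_zero, br_add_right, br_add_right, br_smul_right, br_smul_right,
        br_smul_right, br_id_right, smul_zero, add_zero,
        br_yv1_pd1 (by omega : (0:ℤ) < 2) hm, br_yv1_pd1 (by omega : (0:ℤ) < 1) hm]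
      simp only [show ((2:ℤ) + m = 0) ↔ (m + 0 = -2) from by omega,
        show ((1:ℤ) + m = 0) ↔ (m + 0 = -1) from by omega]
      split_ifs with h1 h2
      · exfalso; omega
      · push_cast; module
      · push_cast; module
      · simp
    · rw [hb1_neg m hm, hb1_pos n hn, br_add_right, br_smul_right, br_smul_right,
        br_yv1_pd1 (by omega : (0:ℤ) < 2 + n) hm, br_yv1_pd1 (by omega : (0:ℤ) < 1 + n) hm]
      simp only [show (2 + n + m = 0) ↔ (m + n = -2) from by omega,
        show (1 + n + m = 0) ↔ (m + n = -1) from by omega]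
      split_ifs with h1 h2
      · exfalso; omega
      · module
      · module
      · simp
    · subst hm
      rw [hb1_zero, hb1_neg n hn, br_add_left, br_add_left, br_smul_left, br_smul_left,
        br_smul_left, br_id_left, smul_zero, add_zero,
        br_pd1_yv1 (by omega : (0:ℤ) < 2) hn, br_pd1_yv1 (by omega : (0:ℤ) < 1) hn]
      simp only [show ((2:ℤ) + n = 0) ↔ ((0:ℤ) + n = -2) from by omega,
        show ((1:ℤ) + n = 0) ↔ ((0:ℤ) + n = -1) from by omega]
      split_ifs with h1 h2
      · exfalso; omega
      · have hc : (n : ℂ) = -2 := by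
          have hn2 : n = -2 := by omega
          rw [hn2]; push_cast; ring
        rw [hc]; module
      · have hc : (n : ℂ) = -1 := by
          have hn2 : n = -1 := by omega
          rw [hn2]; push_cast; ring
        rw [hc]; module
      · simp
    · subst hm; subst hn
      simp only [hb1_zero, br_add_left, br_add_right, br_smul_left, br_smul_right,
        br_id_left, br_id_right, br_pd1_pd1, smul_zero, add_zero, zero_add]
      norm_num
    · subst hm
      simp only [hb1_zero, hb1_pos n hn, br_add_left, br_add_right, br_smul_left, br_smul_right,
        br_id_left, br_pd1_pd1, smul_zero, add_zero, zero_add]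
      rw [if_neg (by omega), if_neg (by omega)]
      norm_num
    · rw [hb1_pos m hm, hb1_neg n hn, br_add_left, br_smul_left, br_smul_left,
        br_pd1_yv1 (by omega : (0:ℤ) < 2 + m) hn, br_pd1_yv1 (by omega : (0:ℤ) < 1 + m) hn]
      simp only [show (2 + m + n = 0) ↔ (m + n = -2) from by omega,
        show (1 + m + n = 0) ↔ (m + n = -1) from by omega]
      split_ifs with h1 h2
      · exfalso; omega
      · have hc : (n : ℂ) = -2 - (m : ℂ) := by
          have hn2 : n = -2 - m := by omega
          rw [hn2]; push_cast; ring
        rw [hc]; module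
      · have hc : (n : ℂ) = -1 - (m : ℂ) := by
          have hn2 : n = -1 - m := by omega
          rw [hn2]; push_cast; ring
        rw [hc]; module
      · simp
    · subst hn
      simp only [hb1_pos m hm, hb1_zero, br_add_left, br_add_right, br_smul_left, br_smul_right,
        br_id_right, br_pd1_pd1, smul_zero, add_zero, zero_add]
      rw [if_neg (by omega), if_neg (by omega)]
      norm_num
    · simp only [hb1_pos m hm, hb1_pos n hn, br_add_left, br_add_right, br_smul_left,
        br_smul_right, br_pd1_pd1, smul_zero, add_zero, zero_add]
      rw [if_neg (by omega), if_neg (by omega)]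
      norm_num
  · show br (ρb1 κ₀ B01 m) (ρb κ₀ B₀ n) = 0
    rcases lt_trichotomy m 0 with hm | hm | hm <;> rcases lt_trichotomy n 0 with hn | hn | hn
    · simp only [hb1_neg m hm, hb_neg n hn, br_add_right, br_mul_mul, br_yv1_pd, br_yv_pd1, br_pd1_yv, br_pd_yv1, br_pd1_pd, br_pd_pd1, br_pd1_pd1, br_pd_pd, br_id_left, br_id_right, smul_zero, add_zero, zero_add]
    · subst hn; simp only [hb1_neg m hm, hb_zero, br_smul_right, br_add_right, br_mul_mul, br_yv1_pd, br_yv_pd1, br_pd1_yv, br_pd_yv1, br_pd1_pd, br_pd_pd1, br_pd1_pd1, br_pd_pd, br_id_left, br_id_right, smul_zero, add_zero, zero_add]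
    · simp only [hb1_neg m hm, hb_pos n hn, br_smul_right, br_add_right, br_mul_mul, br_yv1_pd, br_yv_pd1, br_pd1_yv, br_pd_yv1, br_pd1_pd, br_pd_pd1, br_pd1_pd1, br_pd_pd, br_id_left, br_id_right, smul_zero, add_zero, zero_add]
    · subst hm
      simp only [hb1_zero, hb_neg n hn, br_add_left, br_smul_left, br_add_right, br_mul_mul, br_yv1_pd, br_yv_pd1, br_pd1_yv, br_pd_yv1, br_pd1_pd, br_pd_pd1, br_pd1_pd1, br_pd_pd, br_id_left, br_id_right, smul_zero, add_zero, zero_add]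
    · subst hm; subst hn
      simp only [hb1_zero, hb_zero, br_add_left, br_smul_left, br_smul_right, br_add_right, br_mul_mul, br_yv1_pd, br_yv_pd1, br_pd1_yv, br_pd_yv1, br_pd1_pd, br_pd_pd1, br_pd1_pd1, br_pd_pd, br_id_left, br_id_right, smul_zero, add_zero, zero_add]
    · subst hm
      simp only [hb1_zero, hb_pos n hn, br_add_left, br_smul_left, br_smul_right, br_add_right, br_mul_mul, br_yv1_pd, br_yv_pd1, br_pd1_yv, br_pd_yv1, br_pd1_pd, br_pd_pd1, br_pd1_pd1, br_pd_pd, br_id_left, br_id_right, smul_zero, add_zero, zero_add]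
    · simp only [hb1_pos m hm, hb_neg n hn, br_add_left, br_smul_left, br_add_right, br_mul_mul, br_yv1_pd, br_yv_pd1, br_pd1_yv, br_pd_yv1, br_pd1_pd, br_pd_pd1, br_pd1_pd1, br_pd_pd, br_id_left, br_id_right, smul_zero, add_zero, zero_add]
    · subst hn
      simp only [hb1_pos m hm, hb_zero, br_add_left, br_smul_left, br_smul_right, br_add_right, br_mul_mul, br_yv1_pd, br_yv_pd1, br_pd1_yv, br_pd_yv1, br_pd1_pd, br_pd_pd1, br_pd1_pd1, br_pd_pd, br_id_left, br_id_right, smul_zero, add_zero, zero_add]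
    · simp only [hb1_pos m hm, hb_pos n hn, br_add_left, br_smul_left, br_smul_right, br_add_right, br_mul_mul, br_yv1_pd, br_yv_pd1, br_pd1_yv, br_pd_yv1, br_pd1_pd, br_pd_pd1, br_pd1_pd1, br_pd_pd, br_id_left, br_id_right, smul_zero, add_zero, zero_add]

end
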